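/- Pöschl–Teller transformation identity: Let w(x) = √(α(x)). Then for all x ∈ ℝ, w''(x)/w(x) − b(b+1) = 1/4 − (b(1+2b)/4)·sech²(νx). (This is the identity by which the change of variables f̃ = √α·f conjugates the weighted linearized operator 𝓛 to the Schrödinger operator H = (2k/b²)(−∂_x² + 1/4 − (b(1+2b)/4)sech²(νx)).) -/

import Mathlib

open Real MeasureTheory Filter

noncomputable section

/-- `ν = -(b+1)/2`. -/
def nuP (b : ℝ) : ℝ := -(b + 1) / 2

/-- The lefton momentum profile `Q(x) = (A(1-b)/2) (cosh(νx))^{b/ν}`. -/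
def Qp (b A : ℝ) (x : ℝ) : ℝ :=
  A * (1 - b) / 2 * Real.cosh (nuP b * x) ^ (b / nuP b)

/-- The lefton velocity profile `q(x) = A (cosh(νx))^{-1/ν}`. -/
def qp (b A : ℝ) (x : ℝ) : ℝ := A * Real.cosh (nuP b * x) ^ (-1 / nuP b)

/-- `k = (A(1-b)/2)^{1/b+1}`. -/
def kP (b A : ℝ) : ℝ := (A * (1 - b) / 2) ^ (1 / b + 1)

/-- The weight `α(x) = Q(x)^{-1/b-2}`. -/
def alphaP (b A : ℝ) (x : ℝ) : ℝ := Qp b A x ^ (-1 / b - 2)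

/-- `SQ(x) = (2k(1-b)/b) Q^{-1/b} + (2(b-1)/b) Q`. -/
def SQp (b A : ℝ) (x : ℝ) : ℝ :=
  2 * kP b A * (1 - b) / b * Qp b A x ^ (-1 / b) + 2 * (b - 1) / b * Qp b A x

/-- The Pöschl–Teller potential `H̃₀(x) = 1/4 - (b(1+2b)/4) sech²(νx)`. -/
def Htilde0 (b : ℝ) (x : ℝ) : ℝ :=
  1 / 4 - b * (1 + 2 * b) / 4 * (1 / Real.cosh (nuP b * x)) ^ 2

/-- The Schrödinger operator `(Hg)(x) = (2k/b²)(−g'' + H̃₀ g)`. -/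
def Hop (b A : ℝ) (g : ℝ → ℝ) (x : ℝ) : ℝ :=
  2 * kP b A / b ^ 2 * (-(deriv (deriv g) x) + Htilde0 b x * g x)

/-- The linearized operator `(𝓛f)(x) = k(−((2α/b²) f')' − (2(b+1)/b) α f)`. -/
def Lop (b A : ℝ) (f : ℝ → ℝ) (x : ℝ) : ℝ :=
  kP b A * (-(deriv (fun y => 2 * alphaP b A y / b ^ 2 * deriv f y) x)
    - 2 * (b + 1) / b * alphaP b A x * f x)

/-- The integrand of the conserved functional `F₂`. -/
def F2Integrand (b : ℝ) (f : ℝ → ℝ) (x : ℝ) : ℝ :=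
  f x ^ (-1 / b) * ((deriv f x) ^ 2 / (b ^ 2 * f x ^ 2) + 1)

/-- The squared weighted norm `‖f‖²_{H¹_α} = ∫ (f² + f'²) α`. -/
def HalphaSq (b A : ℝ) (f : ℝ → ℝ) : ℝ :=
  ∫ x, (f x ^ 2 + deriv f x ^ 2) * alphaP b A x

/-- The `𝒵`-norm `‖f‖_𝒵 = ‖f‖_{H¹_α} + sup_x |f(x)|/Q(x)`. -/
def ZNorm (b A : ℝ) (f : ℝ → ℝ) : ℝ :=
  Real.sqrt (HalphaSq b A f) + ⨆ x : ℝ, |f x| / Qp b A x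

/-- `m : ℝ → ℝ → ℝ` (time then space) solves the b-family equation in momentum form,
with velocity `u` satisfying `m = u - u_xx` and `m_t + u m_x + b u_x m = 0`. -/
def IsBFamilySolution (b : ℝ) (m u : ℝ → ℝ → ℝ) : Prop :=
  (∀ t x, m t x = u t x - deriv (deriv (u t)) x) ∧
  ∀ t x, deriv (fun s => m s x) t + u t x * deriv (m t) x + b * deriv (u t) x * m t x = 0

/-- `(v, h)` solves the linearization of the b-family equation around the lefton:
`h - h_xx = v` and `v_t = ∂_x(q h_xx + (b-1) q' h_x - (b+1) q h + q'' h)`. -/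
def IsLinearizedSolution (b A : ℝ) (v h : ℝ → ℝ → ℝ) : Prop :=
  (∀ t x, h t x - deriv (deriv (h t)) x = v t x) ∧
  ∀ t x, deriv (fun s => v s x) t =
    deriv (fun y => qp b A y * deriv (deriv (h t)) y
      + (b - 1) * deriv (qp b A) y * deriv (h t) y
      - (b + 1) * qp b A y * h t y + deriv (deriv (qp b A)) y * h t y) x

/-- The quadratic form `(𝓛η, η) = (2k/b²)∫ η'² α − (2k(b+1)/b)∫ η² α`. -/
def quadFormL (b A : ℝ) (η : ℝ → ℝ) : ℝ :=
  2 * kP b A / b ^ 2 * (∫ x, deriv η x ^ 2 * alphaP b A x)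
    - 2 * kP b A * (b + 1) / b * (∫ x, η x ^ 2 * alphaP b A x)

/-- The monotonicity weight `ψ_L(x) = (2/π) arctan(exp(νx/L))` with `L = 3 - b`. -/
def psiL (b : ℝ) (x : ℝ) : ℝ :=
  2 / Real.pi * Real.arctan (Real.exp (nuP b * x / (3 - b)))

/-- **Pöschl–Teller transformation identity**: for `w = √α`,
`w''/w − b(b+1) = 1/4 − (b(1+2b)/4) sech²(νx)`. -/
theorem poschl_teller_identity (b A : ℝ) (hb : b < -1) (hA : 0 < A) :
    ∀ x : ℝ,
      deriv (deriv (fun y => Real.sqrt (alphaP b A y))) x / Real.sqrt (alphaP b A x)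
          - b * (b + 1)
        = 1 / 4 - b * (1 + 2 * b) / 4 * (1 / Real.cosh (nuP b * x)) ^ 2 := by
  have hb1 : b + 1 < 0 := by linarith
  have hb0 : b ≠ 0 := by intro h; rw [h] at hb; norm_num at hb
  set ν : ℝ := nuP b with hνdef
  have hνval : ν = -(b + 1) / 2 := rfl
  have hν : 0 < ν := by rw [hνval]; linarith
  have hC : 0 < A * (1 - b) / 2 := by nlinarith
  set e : ℝ := -1 / b - 2 with he
  set c : ℝ := (A * (1 - b) / 2) ^ (e / 2) with hcdef
  have hc0 : 0 < c := Real.rpow_pos_of_pos hC _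
  set p : ℝ := (1 + 2 * b) / (b + 1) with hpdef
  have hb1' : b + 1 ≠ 0 := ne_of_lt hb1
  have hq : b / ν * e / 2 = p := by
    have h1 : b * e = -(1 + 2 * b) := by rw [he]; field_simp; ring
    have h3 : ν * 2 = -(b + 1) := by rw [hνval]; ring
    rw [hpdef, div_mul_eq_mul_div, div_div, h1, h3, neg_div_neg_eq]
  -- Step 1
  have hw : ∀ y, Real.sqrt (alphaP b A y)
      = c * Real.exp (Real.log (Real.cosh (ν * y)) * p) := by
    intro y
    have hch : (0:ℝ) < Real.cosh (ν * y) := Real.cosh_pos _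
    have h1 : alphaP b A y = (A * (1 - b) / 2) ^ e * Real.cosh (ν * y) ^ (b / ν * e) := by
      rw [alphaP, Qp, ← hνdef, ← he,
        Real.mul_rpow hC.le (Real.rpow_nonneg hch.le _), ← Real.rpow_mul hch.le]
    rw [h1, Real.sqrt_mul (Real.rpow_nonneg hC.le _), Real.sqrt_eq_rpow,
      Real.sqrt_eq_rpow, ← Real.rpow_mul hC.le, ← Real.rpow_mul hch.le]
    have : e * (1/2) = e / 2 := by ring
    rw [this]
    have : b / ν * e * (1/2) = p := by rw [← hq]; ring
    rw [this, Real.rpow_def_of_pos hch]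
  intro x
  have hE : ∀ y : ℝ, HasDerivAt (fun z => Real.exp (Real.log (Real.cosh (ν * z)) * p))
      (Real.exp (Real.log (Real.cosh (ν * y)) * p)
        * (Real.sinh (ν * y) * ν / Real.cosh (ν * y) * p)) y := by
    intro y
    have h1 : HasDerivAt (fun z : ℝ => ν * z) ν y := by
      simpa using (hasDerivAt_id y).const_mul ν
    have h2 : HasDerivAt (fun z => Real.cosh (ν * z)) (Real.sinh (ν * y) * ν) y :=
      (Real.hasDerivAt_cosh _).comp y h1
    exact ((h2.log (Real.cosh_pos _).ne').mul_const p).exp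
  have hfun : (fun y => Real.sqrt (alphaP b A y))
      = fun y => c * Real.exp (Real.log (Real.cosh (ν * y)) * p) := funext hw
  have hD1 : deriv (fun y => Real.sqrt (alphaP b A y))
      = fun y => c * (Real.exp (Real.log (Real.cosh (ν * y)) * p)
          * (Real.sinh (ν * y) * ν / Real.cosh (ν * y) * p)) := by
    funext y
    rw [hfun]
    exact ((hE y).const_mul c).deriv
  set Ch : ℝ := Real.cosh (ν * x) with hChdef
  set S : ℝ := Real.sinh (ν * x) with hSdef
  set E : ℝ := Real.exp (Real.log Ch * p) with hEdef
  have hch : (0:ℝ) < Ch := Real.cosh_pos _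
  have hE0 : (0:ℝ) < E := Real.exp_pos _
  have h1 : HasDerivAt (fun z : ℝ => ν * z) ν x := by
    simpa using (hasDerivAt_id x).const_mul ν
  have h2 : HasDerivAt (fun z => Real.cosh (ν * z)) (S * ν) x :=
    (Real.hasDerivAt_cosh _).comp x h1
  have hS' : HasDerivAt (fun z => Real.sinh (ν * z)) (Ch * ν) x :=
    (Real.hasDerivAt_sinh _).comp x h1
  have hdiv : HasDerivAt (fun z => Real.sinh (ν * z) * ν / Real.cosh (ν * z))
      ((Ch * ν * ν * Ch - S * ν * (S * ν)) / Ch ^ 2) x :=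
    (hS'.mul_const ν).div h2 (Real.cosh_pos _).ne'
  have hprod : HasDerivAt (fun y => c * (Real.exp (Real.log (Real.cosh (ν * y)) * p)
      * (Real.sinh (ν * y) * ν / Real.cosh (ν * y) * p)))
      (c * (E * (S * ν / Ch * p) * (S * ν / Ch * p)
        + E * ((Ch * ν * ν * Ch - S * ν * (S * ν)) / Ch ^ 2 * p))) x :=
    ((hE x).mul (hdiv.mul_const p)).const_mul c
  have hD2 : deriv (deriv (fun y => Real.sqrt (alphaP b A y))) x
      = c * (E * (S * ν / Ch * p) * (S * ν / Ch * p)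
        + E * ((Ch * ν * ν * Ch - S * ν * (S * ν)) / Ch ^ 2 * p)) := by
    rw [hD1]; exact hprod.deriv
  rw [hD2, hw x, ← hChdef, ← hEdef]
  have hS2 : S ^ 2 = Ch ^ 2 - 1 := by
    have := Real.cosh_sq (ν * x); rw [← hChdef, ← hSdef] at this; linarith
  have hratio : c * (E * (S * ν / Ch * p) * (S * ν / Ch * p)
        + E * ((Ch * ν * ν * Ch - S * ν * (S * ν)) / Ch ^ 2 * p)) / (c * E)
      = ν ^ 2 * p ^ 2 - ν ^ 2 * (p * (p - 1)) * (1 / Ch) ^ 2 := by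
    rw [div_eq_iff (by positivity)]
    field_simp
    ring_nf
    linear_combination ((-(2*b)*(1+b)⁻¹ + 4*b*(1+b)⁻¹^2 + 4*b^2*(1+b)⁻¹^2 - (1+b)⁻¹ + (1+b)⁻¹^2)) * hS2
  rw [hratio]
  have c1 : ν ^ 2 * p ^ 2 = (1 + 2 * b) ^ 2 / 4 := by
    rw [hνval, hpdef]; field_simp; ring
  have c2 : ν ^ 2 * (p * (p - 1)) = b * (1 + 2 * b) / 4 := by
    rw [hνval, hpdef]; field_simp; ring
  linear_combination c1 - (1 / Ch) ^ 2 * c2
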